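/- Let F ∈ ℂ((x)) be a Laurent series with ord F = 0, with constant coefficient α, and with nonzero coefficient of x. Then f(F) is a square in ℂ((x)) if and only if f(α) ≠ 0. -/

import Mathlib

open PowerSeries HahnSeries

noncomputable def sqc (q : ℕ → ℂ) (c : ℂ) : ℕ → ℂ
  | 0 => c
  | n + 1 => (q (n + 1) -
      ∑ i ∈ (Finset.Ioo 0 (n + 1)).attach, sqc q c i.1 * sqc q c (n + 1 - i.1)) / (2 * c)
decreasing_by
  · exact (Finset.mem_Ioo.mp i.2).2
  · have := (Finset.mem_Ioo.mp i.2).1; omega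

lemma sqc_spec (q : ℕ → ℂ) (c : ℂ) (hc : c ≠ 0) (h0 : c ^ 2 = q 0) :
    (PowerSeries.mk (sqc q c)) ^ 2 = PowerSeries.mk q := by
  ext n
  rw [pow_two, PowerSeries.coeff_mul, Finset.Nat.sum_antidiagonal_eq_sum_range_succ_mk]
  simp only [PowerSeries.coeff_mk]
  cases n with
  | zero => simpa [sqc, ← pow_two] using h0
  | succ n =>
      have hset : Finset.range (n + 2) = insert 0 (insert (n + 1) (Finset.Ioo 0 (n + 1))) := by
        ext m; simp [Finset.mem_Ioo]; omega
      have h1 : (0 : ℕ) ∉ insert (n + 1) (Finset.Ioo 0 (n + 1)) := by simp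
      have h2 : n + 1 ∉ Finset.Ioo 0 (n + 1) := by simp
      rw [hset, Finset.sum_insert h1, Finset.sum_insert h2]
      have hrec : sqc q c (n + 1) = (q (n + 1) -
          ∑ i ∈ Finset.Ioo 0 (n + 1), sqc q c i * sqc q c (n + 1 - i)) / (2 * c) := by
        rw [sqc]
        congr 2
        exact Finset.sum_attach (Finset.Ioo 0 (n + 1)) (fun i => sqc q c i * sqc q c (n + 1 - i))
      have h01 : sqc q c 0 = c := by rw [sqc]
      rw [Nat.sub_zero, Nat.sub_self, h01, hrec]
      field_simp
      ring

lemma coeff_zero_ofPS (V : PowerSeries ℂ) :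
    (HahnSeries.ofPowerSeries ℤ ℂ V).coeff 0 = PowerSeries.constantCoeff (R := ℂ) V := by
  rw [show ((0 : ℤ)) = ((0 : ℕ) : ℤ) by simp, HahnSeries.ofPowerSeries_apply_coeff]
  simp

lemma order_ofPS (V : PowerSeries ℂ) (h : PowerSeries.constantCoeff (R := ℂ) V ≠ 0) :
    (HahnSeries.ofPowerSeries ℤ ℂ V).order = 0 := by
  have hc0 : (HahnSeries.ofPowerSeries ℤ ℂ V).coeff 0 ≠ 0 := by
    rw [coeff_zero_ofPS]; exact h
  have hne : HahnSeries.ofPowerSeries ℤ ℂ V ≠ 0 := by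
    intro h0; rw [h0] at hc0; simp at hc0
  have hneg : ∀ m : ℤ, m < 0 → (HahnSeries.ofPowerSeries ℤ ℂ V).coeff m = 0 := by
    intro m hm
    rw [HahnSeries.ofPowerSeries_apply]
    apply HahnSeries.embDomain_notin_range
    rintro ⟨k, hk⟩
    simp at hk
    omega
  refine le_antisymm (HahnSeries.order_le_of_coeff_ne_zero hc0) ?_
  by_contra hlt
  push_neg at hlt
  exact (mt HahnSeries.coeff_order_eq_zero.mp hne) (hneg _ hlt)



/-- for a square-free polynomial `f` of degree `≥ 3` and a Laurent
series `F` of order `0` with constant coefficient `α` and nonzero coefficient of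
`x`, `f(F)` is a square in `ℂ((x))` iff `f(α) ≠ 0`. -/
theorem stmt_18 (f : Polynomial ℂ) (hf : Squarefree f) (hdeg : 3 ≤ f.natDegree)
    (α : ℂ) (F : LaurentSeries ℂ) (hF : F ≠ 0) (hord : F.order = 0)
    (hconst : F.coeff 0 = α) (hlin : F.coeff 1 ≠ 0) :
    (∃ G : LaurentSeries ℂ, Polynomial.aeval F f = G ^ 2) ↔ Polynomial.eval α f ≠ 0 := by
  set P : PowerSeries ℂ := F.powerSeriesPart with hP
  have hF_eq : F = HahnSeries.ofPowerSeries ℤ ℂ P := by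
    have h := F.single_order_mul_powerSeriesPart
    rw [hord, HahnSeries.single_zero_one, one_mul] at h
    exact h.symm
  have hPc : PowerSeries.constantCoeff (R := ℂ) P = α := by
    have h := F.powerSeriesPart_coeff 0
    rw [hord, zero_add, Nat.cast_zero] at h
    rw [← PowerSeries.coeff_zero_eq_constantCoeff, h]
    exact hconst
  have hP1 : PowerSeries.coeff (R := ℂ) 1 P = F.coeff 1 := by
    have h := F.powerSeriesPart_coeff 1
    rw [hord, zero_add, Nat.cast_one] at h
    exact h
  have hcomp : (HahnSeries.ofPowerSeries ℤ ℂ).comp (algebraMap ℂ (PowerSeries ℂ)) =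
      algebraMap ℂ (LaurentSeries ℂ) := by
    first
    | rfl
    | (refine RingHom.ext fun a => ?_
       simp [HahnSeries.algebraMap_apply', HahnSeries.algebraMap_apply,
         PowerSeries.algebraMap_apply])
  have haev : ∀ p : Polynomial ℂ,
      Polynomial.aeval F p = HahnSeries.ofPowerSeries ℤ ℂ (Polynomial.aeval P p) := by
    intro p
    rw [Polynomial.aeval_def, Polynomial.aeval_def, hF_eq, ← hcomp, ← Polynomial.hom_eval₂]
  have hid : (PowerSeries.constantCoeff (R := ℂ)).comp (algebraMap ℂ (PowerSeries ℂ)) =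
      RingHom.id ℂ := by
    refine RingHom.ext fun a => ?_
    simp [PowerSeries.algebraMap_apply]
  have hconstQ : ∀ p : Polynomial ℂ,
      PowerSeries.constantCoeff (R := ℂ) (Polynomial.aeval P p) = Polynomial.eval α p := by
    intro p
    rw [Polynomial.aeval_def, Polynomial.hom_eval₂, hid, hPc]
    rfl
  constructor
  · rintro ⟨G, hG⟩ hα0
    -- hα0 : eval α f = 0, derive contradiction
    obtain ⟨g, hfg⟩ := Polynomial.dvd_iff_isRoot.mpr hα0
    have hg0 : Polynomial.eval α g ≠ 0 := by
      intro h
      obtain ⟨k, hk⟩ := Polynomial.dvd_iff_isRoot.mpr h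
      have hdvd : (Polynomial.X - Polynomial.C α) * (Polynomial.X - Polynomial.C α) ∣ f :=
        ⟨k, by rw [hfg, hk]; ring⟩
      exact Polynomial.not_isUnit_X_sub_C α (hf _ hdvd)
    have hPf : Polynomial.aeval P f = (P - PowerSeries.C (R := ℂ) α) * Polynomial.aeval P g := by
      rw [hfg, map_mul]
      congr 1
      simp [PowerSeries.algebraMap_apply]
    obtain ⟨W, hW⟩ : (PowerSeries.X : PowerSeries ℂ) ∣ (P - PowerSeries.C (R := ℂ) α) :=
      PowerSeries.X_dvd_iff.mpr (by simp [hPc])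
    have hW0 : PowerSeries.constantCoeff (R := ℂ) W ≠ 0 := by
      have h1 : PowerSeries.coeff (R := ℂ) 1 (P - PowerSeries.C (R := ℂ) α) = F.coeff 1 := by
        simp [hP1, PowerSeries.coeff_C]
      rw [hW, show (1 : ℕ) = 0 + 1 from rfl, PowerSeries.coeff_succ_X_mul,
        PowerSeries.coeff_zero_eq_constantCoeff] at h1
      rw [h1]; exact hlin
    set V : PowerSeries ℂ := W * Polynomial.aeval P g with hV
    have hV0 : PowerSeries.constantCoeff (R := ℂ) V ≠ 0 := by
      rw [hV, map_mul, hconstQ g]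
      exact mul_ne_zero hW0 hg0
    have hff : Polynomial.aeval F f = HahnSeries.single (1 : ℤ) 1 *
        HahnSeries.ofPowerSeries ℤ ℂ V := by
      rw [haev f, hPf, hW, mul_assoc, ← hV, map_mul, HahnSeries.ofPowerSeries_X]
    have hS : HahnSeries.ofPowerSeries ℤ ℂ V ≠ 0 := by
      intro h0
      have := coeff_zero_ofPS V
      rw [h0] at this
      simp at this
      exact hV0 this.symm
    have hfne : Polynomial.aeval F f ≠ 0 := by
      rw [hff]
      exact mul_ne_zero (HahnSeries.single_ne_zero one_ne_zero) hS
    have hordf : (Polynomial.aeval F f).order = 1 := by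
      rw [hff, HahnSeries.order_mul (HahnSeries.single_ne_zero one_ne_zero) hS,
        HahnSeries.order_single one_ne_zero, order_ofPS V hV0, add_zero]
    have hGne : G ≠ 0 := by
      rintro rfl
      rw [hG] at hfne
      simp at hfne
    have hpar : (1 : ℤ) = G.order + G.order := by
      rw [← hordf, hG, pow_two, HahnSeries.order_mul hGne hGne]
    omega
  · intro hα
    set Q : PowerSeries ℂ := Polynomial.aeval P f with hQ
    have hQ0 : PowerSeries.constantCoeff (R := ℂ) Q = Polynomial.eval α f := hconstQ f
    obtain ⟨c, hc⟩ := IsAlgClosed.exists_pow_nat_eq (PowerSeries.constantCoeff (R := ℂ) Q) zero_lt_two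
    have hcne : c ≠ 0 := by
      intro h
      rw [h] at hc
      simp at hc
      exact hα (by rw [← hQ0, ← hc])
    have hsq : (PowerSeries.mk (sqc (fun n => PowerSeries.coeff (R := ℂ) n Q) c)) ^ 2 = Q := by
      rw [sqc_spec _ _ hcne (by simpa [PowerSeries.coeff_zero_eq_constantCoeff] using hc)]
      ext n
      simp [PowerSeries.coeff_mk]
    refine ⟨HahnSeries.ofPowerSeries ℤ ℂ (PowerSeries.mk (sqc (fun n => PowerSeries.coeff (R := ℂ) n Q) c)), ?_⟩
    rw [haev f, ← hQ, ← map_pow, hsq]
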